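/- For the generalized cross-entropy objective with parameter 0 ≤ λ < 1, the minimizer p* of ∑_{i=1}^K q_i (1 − p_i^λ)/λ over p ∈ Δ_K satisfies p*_i ∝ q_i^{1/(1−λ)}; in particular p* is rank consistent with q (q_i < q_j implies p*_i < p*_j). -/

import Mathlib

open Finset

lemma gibbs_ineq {K : ℕ} (q p : Fin K → ℝ) (hq0 : ∀ i, 0 < q i) (hp0 : ∀ i, 0 < p i)
    (hq1 : ∑ i, q i = 1) (hp1 : ∑ i, p i = 1) :
    ∑ i, q i * (-(Real.log (q i))) ≤ ∑ i, q i * (-(Real.log (p i))) := by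
  rw [← sub_nonneg, ← Finset.sum_sub_distrib]
  have h : ∀ i ∈ Finset.univ (α := Fin K),
      q i * (Real.log (p i) - Real.log (q i)) ≤ p i - q i := by
    intro i _
    have hlog : Real.log (p i) - Real.log (q i) = Real.log (p i / q i) :=
      (Real.log_div (hp0 i).ne' (hq0 i).ne').symm
    have h2 := Real.log_le_sub_one_of_pos (div_pos (hp0 i) (hq0 i))
    rw [hlog]
    have hqi := hq0 i
    have : q i * Real.log (p i / q i) ≤ q i * (p i / q i - 1) :=
      mul_le_mul_of_nonneg_left h2 hqi.le
    calc q i * Real.log (p i / q i) ≤ q i * (p i / q i - 1) := this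
      _ = p i - q i := by field_simp
  have hsum := Finset.sum_le_sum h
  rw [Finset.sum_sub_distrib, hq1, hp1] at hsum
  have : ∑ i, q i * (Real.log (p i) - Real.log (q i)) ≤ 0 := by linarith
  calc (0:ℝ) ≤ - ∑ i, q i * (Real.log (p i) - Real.log (q i)) := by linarith
    _ = ∑ i, (q i * -Real.log (p i) - q i * -Real.log (q i)) := by
        rw [← Finset.sum_neg_distrib]; apply Finset.sum_congr rfl; intro i _; ring

lemma midpoint_log {x y : ℝ} (hx : 0 < x) (hy : 0 < y) (hxy : x ≠ y) :
    (Real.log x + Real.log y) / 2 < Real.log ((x + y) / 2) := by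
  have := strictConcaveOn_log_Ioi.2 (Set.mem_Ioi.2 hx) (Set.mem_Ioi.2 hy) hxy
    (show (0:ℝ) < 1/2 by norm_num) (show (0:ℝ) < 1/2 by norm_num)
    (show (1:ℝ)/2 + 1/2 = 1 by norm_num)
  simp only [smul_eq_mul] at this
  have e1 : (x + y) / 2 = 1/2 * x + 1/2 * y := by ring
  rw [e1]; linarith

lemma midpoint_log_le {x y : ℝ} (hx : 0 < x) (hy : 0 < y) :
    (Real.log x + Real.log y) / 2 ≤ Real.log ((x + y) / 2) := by
  rcases eq_or_ne x y with rfl | h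
  · rw [show (x + x) / 2 = x by ring]; linarith
  · exact (midpoint_log hx hy h).le

lemma midpoint_rpow {lam x y : ℝ} (h0 : 0 < lam) (h1 : lam < 1) (hx : 0 ≤ x) (hy : 0 ≤ y)
    (hxy : x ≠ y) : (x ^ lam + y ^ lam) / 2 < ((x + y) / 2) ^ lam := by
  have := (Real.strictConcaveOn_rpow h0 h1).2 (Set.mem_Ici.2 hx) (Set.mem_Ici.2 hy) hxy
    (show (0:ℝ) < 1/2 by norm_num) (show (0:ℝ) < 1/2 by norm_num)
    (show (1:ℝ)/2 + 1/2 = 1 by norm_num)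
  simp only [smul_eq_mul] at this
  have e1 : (x + y) / 2 = 1/2 * x + 1/2 * y := by ring
  rw [e1]; linarith

lemma midpoint_rpow_le {lam x y : ℝ} (h0 : 0 < lam) (h1 : lam < 1) (hx : 0 ≤ x) (hy : 0 ≤ y) :
    (x ^ lam + y ^ lam) / 2 ≤ ((x + y) / 2) ^ lam := by
  rcases eq_or_ne x y with rfl | h
  · rw [show (x + x) / 2 = x by ring]; linarith
  · exact (midpoint_rpow h0 h1 hx hy h).le

lemma gce_holder {K : ℕ} {lam : ℝ} (h0 : 0 < lam) (h1 : lam < 1)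
    (q p : Fin K → ℝ) (hq0 : ∀ i, 0 < q i) (hp0 : ∀ i, 0 < p i) (hp1 : ∑ i, p i = 1) :
    ∑ i, q i * p i ^ lam ≤ (∑ i, q i ^ (1/(1-lam))) ^ (1 - lam) := by
  have h1l : 0 < 1 - lam := by linarith
  have hconj : (1/(1-lam)).HolderConjugate (1/lam) := by
    rw [Real.holderConjugate_iff]
    constructor
    · rw [lt_div_iff₀ h1l]; linarith
    · rw [one_div, inv_inv, one_div, inv_inv]; ring
  have hhold := Real.inner_le_Lp_mul_Lq Finset.univ q (fun i => p i ^ lam) hconj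
  have e1 : ∀ i : Fin K, |q i| ^ (1/(1-lam)) = q i ^ (1/(1-lam)) := fun i => by
    rw [abs_of_pos (hq0 i)]
  have e2 : ∀ i : Fin K, |p i ^ lam| ^ (1/lam) = p i := fun i => by
    rw [abs_of_pos (Real.rpow_pos_of_pos (hp0 i) lam), ← Real.rpow_mul (hp0 i).le,
      mul_one_div, div_self h0.ne', Real.rpow_one]
  simp only [e1, e2] at hhold
  rw [hp1, one_div_one_div, one_div_one_div, Real.one_rpow, mul_one] at hhold
  exact hhold

/-- The minimizer of the GCE objective `∑ q_i (1 − p_i^λ)/λ` (λ = 0 interpreted as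
`−∑ q_i log p_i`) over the (positive) simplex is proportional to `q_i^{1/(1−λ)}`; in
particular it is rank consistent with `q`. -/
theorem gce_minimizer_rank_consistent (K : ℕ) (hK : 2 ≤ K) (lam : ℝ)
    (hlam0 : 0 ≤ lam) (hlam1 : lam < 1)
    (q : Fin K → ℝ) (hq0 : ∀ i, 0 < q i) (hq1 : ∑ i : Fin K, q i = 1)
    (L : (Fin K → ℝ) → ℝ)
    (hL : L = fun p => if lam = 0 then ∑ i : Fin K, q i * (-(Real.log (p i)))
      else ∑ i : Fin K, q i * ((1 - p i ^ lam) / lam))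
    (pstar : Fin K → ℝ) (hp0 : ∀ i, 0 < pstar i) (hp1 : ∑ i : Fin K, pstar i = 1)
    (hmin : ∀ p : Fin K → ℝ, (∀ i, 0 < p i) → (∑ i : Fin K, p i = 1) → L pstar ≤ L p) :
    (∃ a : ℝ, 0 < a ∧ ∀ i : Fin K, pstar i = a * q i ^ (1 / (1 - lam))) ∧
    (∀ i j : Fin K, q i < q j → pstar i < pstar j) := by
  have h1l : 0 < 1 - lam := by linarith
  set r : ℝ := 1 / (1 - lam) with hrdef
  have hr : 0 < r := by positivity
  set Z : ℝ := ∑ i : Fin K, q i ^ r with hZdef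
  have hZ : 0 < Z := Finset.sum_pos (fun i _ => Real.rpow_pos_of_pos (hq0 i) r)
    ⟨⟨0, by omega⟩, Finset.mem_univ _⟩
  set phat : Fin K → ℝ := fun i => q i ^ r / Z with hphatdef
  have hphat0 : ∀ i, 0 < phat i := fun i => div_pos (Real.rpow_pos_of_pos (hq0 i) r) hZ
  have hphat1 : ∑ i : Fin K, phat i = 1 := by
    simp only [hphatdef, ← Finset.sum_div]
    rw [← hZdef, div_self hZ.ne']
  -- the candidate minimizer also minimizes
  have hkey : ∀ p : Fin K → ℝ, (∀ i, 0 < p i) → (∑ i : Fin K, p i = 1) → L phat ≤ L p := by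
    intro p hpp hps
    by_cases hl : lam = 0
    · subst hl
      have hr1 : r = 1 := by rw [hrdef]; norm_num
      have hphatq : phat = q := by
        funext i
        simp only [hphatdef, hZdef, hr1, Real.rpow_one, hq1, div_one]
      rw [hL]
      simp only [if_pos rfl]
      rw [hphatq]
      exact gibbs_ineq q p hq0 hpp hq1 hps
    · have hl0 : 0 < lam := lt_of_le_of_ne hlam0 (Ne.symm hl)
      rw [hL]
      simp only [if_neg hl]
      have hred : ∀ (x : Fin K → ℝ), ∑ i : Fin K, q i * ((1 - x i ^ lam) / lam)
          = (1 - ∑ i : Fin K, q i * x i ^ lam) / lam := by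
        intro x
        have e : ∀ i : Fin K, q i * ((1 - x i ^ lam) / lam)
            = (q i - q i * x i ^ lam) / lam := fun i => by ring
        simp only [e]
        rw [← Finset.sum_div, Finset.sum_sub_distrib, hq1]
      rw [hred, hred]
      rw [div_le_div_iff_of_pos_right hl0]
      have hSphat : ∑ i : Fin K, q i * phat i ^ lam = Z ^ (1 - lam) := by
        have hcalc : ∀ i : Fin K, q i * phat i ^ lam = q i ^ r / Z ^ lam := by
          intro i
          have h1 : phat i ^ lam = q i ^ (r * lam) / Z ^ lam := by
            simp only [hphatdef]
            rw [Real.div_rpow (Real.rpow_nonneg (hq0 i).le r) hZ.le,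
              ← Real.rpow_mul (hq0 i).le]
          rw [h1, ← mul_div_assoc]
          congr 1
          have e3 : q i * q i ^ (r * lam) = q i ^ (1 + r * lam) := by
            rw [Real.rpow_add (hq0 i), Real.rpow_one]
          rw [e3]
          congr 1
          rw [hrdef]
          field_simp; ring
        simp only [hcalc]
        rw [← Finset.sum_div, ← hZdef, Real.rpow_sub hZ, Real.rpow_one]
      have hhold := gce_holder hl0 hlam1 q p hq0 hpp hps
      rw [← hrdef, ← hZdef] at hhold
      rw [hSphat]
      linarith
  have hLeq : L pstar = L phat := le_antisymm (hmin phat hphat0 hphat1) (hkey pstar hp0 hp1)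
  have hps_eq : pstar = phat := by
    by_contra hne
    obtain ⟨i0, hi0⟩ : ∃ i, pstar i ≠ phat i := by
      by_contra h; push_neg at h; exact hne (funext h)
    set m : Fin K → ℝ := fun i => (pstar i + phat i) / 2 with hm
    have hm0 : ∀ i, 0 < m i := fun i => by
      have := hp0 i; have := hphat0 i
      simp only [hm]; positivity
    have hm1 : ∑ i : Fin K, m i = 1 := by
      simp only [hm, ← Finset.sum_div]
      rw [Finset.sum_add_distrib, hp1, hphat1]; norm_num
    have hstrict : L m < (L pstar + L phat) / 2 := by
      rw [hL]
      by_cases hl : lam = 0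
      · simp only [if_pos hl]
        rw [← Finset.sum_add_distrib, Finset.sum_div]
        apply Finset.sum_lt_sum
        · intro i _
          have hc := midpoint_log_le (hp0 i) (hphat0 i)
          have hqi := hq0 i
          simp only [hm]
          nlinarith
        · refine ⟨i0, Finset.mem_univ _, ?_⟩
          have hc := midpoint_log (hp0 i0) (hphat0 i0) hi0
          have hqi := hq0 i0
          simp only [hm]
          nlinarith
      · have hl0 : 0 < lam := lt_of_le_of_ne hlam0 (Ne.symm hl)
        simp only [if_neg hl]
        rw [← Finset.sum_add_distrib, Finset.sum_div]
        apply Finset.sum_lt_sum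
        · intro i _
          have hc := midpoint_rpow_le hl0 hlam1 (hp0 i).le (hphat0 i).le
          have hqi := hq0 i
          simp only [hm]
          have h2 : (1 - ((pstar i + phat i) / 2) ^ lam) / lam
              ≤ (1 - (pstar i ^ lam + phat i ^ lam) / 2) / lam := by
            rw [div_le_div_iff_of_pos_right hl0]; linarith
          calc q i * ((1 - ((pstar i + phat i) / 2) ^ lam) / lam)
              ≤ q i * ((1 - (pstar i ^ lam + phat i ^ lam) / 2) / lam) :=
                mul_le_mul_of_nonneg_left h2 hqi.le
            _ = (q i * ((1 - pstar i ^ lam) / lam) + q i * ((1 - phat i ^ lam) / lam)) / 2 := by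
                ring
        · refine ⟨i0, Finset.mem_univ _, ?_⟩
          have hc := midpoint_rpow hl0 hlam1 (hp0 i0).le (hphat0 i0).le hi0
          have hqi := hq0 i0
          simp only [hm]
          have h2 : (1 - ((pstar i0 + phat i0) / 2) ^ lam) / lam
              < (1 - (pstar i0 ^ lam + phat i0 ^ lam) / 2) / lam := by
            rw [div_lt_div_iff_of_pos_right hl0]; linarith
          calc q i0 * ((1 - ((pstar i0 + phat i0) / 2) ^ lam) / lam)
              < q i0 * ((1 - (pstar i0 ^ lam + phat i0 ^ lam) / 2) / lam) :=
                (mul_lt_mul_iff_right₀ hqi).2 h2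
            _ = (q i0 * ((1 - pstar i0 ^ lam) / lam) + q i0 * ((1 - phat i0 ^ lam) / lam)) / 2 := by
                ring
    have hlt : L m < L pstar := by rw [hLeq] at hstrict ⊢; linarith
    exact absurd (hmin m hm0 hm1) (not_le.2 hlt)
  constructor
  · refine ⟨1 / Z, by positivity, fun i => ?_⟩
    rw [hps_eq]
    simp only [hphatdef]
    ring
  · intro i j hij
    rw [hps_eq]
    simp only [hphatdef]
    exact (div_lt_div_iff_of_pos_right hZ).2 (Real.rpow_lt_rpow (hq0 i).le hij hr)
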